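/- Let T be a finite tree with at least two vertices that has no vertex of degree 2, and let p_1, …, p_k be simple paths in T such that every edge of T lies on at least one of the paths. Then T has at most 4k − 2 vertices. -/
import Mathlib


open Classical

noncomputable section

/-- The plane. -/
abbrev Point : Type := ℝ × ℝ

/-- A straight-line drawing `f` of a simple graph `G` is *proper* if it is injective,
the segments of any two distinct edges sharing a vertex `v` intersect exactly in `f v`,
and no vertex other than the endpoints lies on the segment of an edge. -/
def IsProperDrawing {V : Type*} (G : SimpleGraph V) (f : V → Point) : Prop :=
  Function.Injective f ∧
  (∀ u v w : V, G.Adj u v → G.Adj v w → u ≠ w →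
    segment ℝ (f u) (f v) ∩ segment ℝ (f v) (f w) = {f v}) ∧
  (∀ u v x : V, G.Adj u v → x ≠ u → x ≠ v → f x ∉ segment ℝ (f u) (f v))

/-- A *planar* straight-line drawing: proper, and segments of edges with no
common endpoint are disjoint. -/
def IsPlanarDrawing {V : Type*} (G : SimpleGraph V) (f : V → Point) : Prop :=
  IsProperDrawing G f ∧
  ∀ u v w x : V, G.Adj u v → G.Adj w x → u ≠ w → u ≠ x → v ≠ w → v ≠ x →
    segment ℝ (f u) (f v) ∩ segment ℝ (f w) (f x) = ∅

/-- Number of bends of a path (given by its list of vertices) in the drawing `f`: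
a bend at each internal vertex `b` (consecutive triple `a, b, c`) such that
`f b` is not strictly between `f a` and `f c`. -/
def numBends {V : Type*} (f : V → Point) : List V → ℕ
  | a :: b :: c :: rest =>
    (if f b ∈ openSegment ℝ (f a) (f c) then 0 else 1) + numBends f (b :: c :: rest)
  | _ => 0

/-- The edges of a path given by its list of vertices. -/
def edgesOfList {V : Type*} : List V → List (Sym2 V)
  | a :: b :: rest => s(a, b) :: edgesOfList (b :: rest)
  | _ => []

/-- A list of vertices represents a simple path of `G`. -/
def IsPathList {V : Type*} (G : SimpleGraph V) (l : List V) : Prop :=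
  l.Chain' G.Adj ∧ l.Nodup

/-- A path-based support: a set of simple paths of `G` covering all edges of `G`. -/
def IsPathBasedSupport {V : Type*} (G : SimpleGraph V) (P : Finset (List V)) : Prop :=
  (∀ l ∈ P, IsPathList G l) ∧ ∀ e ∈ G.edgeSet, ∃ l ∈ P, e ∈ edgesOfList l

/-- A path-based support is *linear* if two distinct paths share at most one vertex. -/
def IsLinear {V : Type*} (P : Finset (List V)) : Prop :=
  ∀ l₁ ∈ P, ∀ l₂ ∈ P, l₁ ≠ l₂ →
    ∀ u v : V, u ∈ l₁ → u ∈ l₂ → v ∈ l₁ → v ∈ l₂ → u = v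

/-- An *alignment* of `G`: a symmetric relation pairing distinct incident edges of `G`,
such that at every vertex each incident edge is paired with at most one
other edge incident to that vertex. -/
structure IsAlignment {V : Type*} (G : SimpleGraph V) (A : Sym2 V → Sym2 V → Prop) : Prop where
  symm : ∀ e e', A e e' → A e' e
  mem_edges : ∀ e e', A e e' → e ∈ G.edgeSet ∧ e' ∈ G.edgeSet
  ne : ∀ e e', A e e' → e ≠ e'
  share : ∀ e e', A e e' → ∃ v : V, v ∈ e ∧ v ∈ e'
  uniq : ∀ (v : V) (e e₁ e₂ : Sym2 V), v ∈ e → v ∈ e₁ → v ∈ e₂ →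
    A e e₁ → A e e₂ → e₁ = e₂

/-- Number of bends of a path with respect to an alignment `A`:
a bend at each internal vertex whose two incident path edges are not paired in `A`. -/
def numBendsA {V : Type*} (A : Sym2 V → Sym2 V → Prop) : List V → ℕ
  | a :: b :: c :: rest =>
    (if A s(a, b) s(b, c) then 0 else 1) + numBendsA A (b :: c :: rest)
  | _ => 0

/-- A cactus: a connected graph in which every edge lies on at most one cycle,
i.e. two cycles sharing an edge have the same edge set. -/
def IsCactus {V : Type*} (G : SimpleGraph V) : Prop :=
  G.Connected ∧ ∀ (v w : V) (c : G.Walk v v) (c' : G.Walk w w),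
    c.IsCycle → c'.IsCycle → (∃ e, e ∈ c.edges ∧ e ∈ c'.edges) →
    ∀ e, e ∈ c.edges ↔ e ∈ c'.edges

end

/-- If a finite tree `T` with at least two vertices has no vertex of
degree 2 and its edges are covered by `k` simple paths, then `T` has at most `4k - 2`
vertices. -/
lemma adj_eq_of_deg1 {V : Type*} [Fintype V] {G : SimpleGraph V} [DecidableRel G.Adj]
    {v a c : V} (hv : G.degree v = 1) (ha : G.Adj v a) (hc : G.Adj v c) : a = c :=
  Finset.card_le_one.mp hv.le a (G.mem_neighborFinset v a |>.mpr ha)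
    c (G.mem_neighborFinset v c |>.mpr hc)

lemma leaf_endpt {V : Type*} [Fintype V] {G : SimpleGraph V} [DecidableRel G.Adj] {v : V}
    (hv : G.degree v = 1) :
    ∀ l : List V, l.Chain' G.Adj → l.Nodup →
      (∃ e ∈ edgesOfList l, v ∈ e) → l.head? = some v ∨ l.getLast? = some v
  | [] => by simp [edgesOfList]
  | [a] => by simp [edgesOfList]
  | a :: b :: rest => by
    rintro hch hnd ⟨e, he, hve⟩
    rw [edgesOfList, List.mem_cons] at he
    have hab : G.Adj a b := hch.rel_head
    rcases he with rfl | he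
    · rcases Sym2.mem_iff.mp hve with rfl | rfl
      · left; rfl
      · -- v = b
        cases rest with
        | nil => right; simp [List.getLast?]
        | cons c t =>
          have hbc : G.Adj v c := (List.isChain_cons_cons.mp hch).2.rel_head
          have hac : a = c := adj_eq_of_deg1 hv hab.symm hbc
          exfalso
          have := (List.nodup_cons.mp hnd).1
          simp [hac] at this
    · have IH := leaf_endpt hv (b :: rest) (List.isChain_cons_cons.mp hch).2
        (List.nodup_cons.mp hnd).2 ⟨e, he, hve⟩
      rcases IH with hh | hl
      · -- v = b
        have hvb : v = b := by simpa using hh.symm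
        subst hvb
        cases rest with
        | nil => simp [edgesOfList] at he
        | cons c t =>
          have hbc : G.Adj v c := (List.isChain_cons_cons.mp hch).2.rel_head
          have hac : a = c := adj_eq_of_deg1 hv hab.symm hbc
          exfalso
          have := (List.nodup_cons.mp hnd).1
          simp [hac] at this
      · right
        rwa [List.getLast?_cons_cons]


theorem stmt9 {V : Type*} [Fintype V] (G : SimpleGraph V) [DecidableRel G.Adj]
    (hT : G.IsTree) (h2 : 2 ≤ Fintype.card V)
    (hdeg : ∀ v : V, G.degree v ≠ 2)
    (k : ℕ) (p : Fin k → List V) (hp : ∀ i, IsPathList G (p i))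
    (hcover : ∀ e ∈ G.edgeSet, ∃ i, e ∈ edgesOfList (p i)) :
    Fintype.card V ≤ 4 * k - 2 := by
  classical
  have hconn := hT.isConnected
  -- every vertex has positive degree
  have hdpos : ∀ v : V, 0 < G.degree v := by
    intro v
    obtain ⟨w, hw⟩ := Fintype.exists_ne_of_one_lt_card (by omega) v
    obtain ⟨pw⟩ := hconn.preconnected v w
    rw [G.degree_pos_iff_exists_adj]
    cases pw with
    | nil => exact absurd rfl hw
    | cons h q => exact ⟨_, h⟩
  -- k is positive
  have hk : 0 < k := by
    obtain ⟨v⟩ := hconn.nonempty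
    obtain ⟨u, hu⟩ := G.degree_pos_iff_exists_adj v |>.mp (hdpos v)
    obtain ⟨i, -⟩ := hcover s(v, u) hu
    exact i.pos
  set L : Finset V := Finset.univ.filter (fun v => G.degree v = 1) with hLdef
  -- leaves inject into Fin k × Bool
  have hx : ∀ v ∈ L, ∃ i : Fin k, ∃ e ∈ edgesOfList (p i), v ∈ e := by
    intro v hvL
    have hv1 : G.degree v = 1 := (Finset.mem_filter.mp hvL).2
    obtain ⟨u, hu⟩ := G.degree_pos_iff_exists_adj v |>.mp (hdpos v)
    obtain ⟨i, hi⟩ := hcover s(v, u) hu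
    exact ⟨i, s(v, u), hi, by simp⟩
  have hL : L.card ≤ 2 * k := by
    set idx : V → Fin k := fun v =>
      if h : ∃ i : Fin k, ∃ e ∈ edgesOfList (p i), v ∈ e then h.choose else ⟨0, hk⟩
      with hidx
    have hidxspec : ∀ v ∈ L, ∃ e ∈ edgesOfList (p (idx v)), v ∈ e := by
      intro v hvL
      have h := hx v hvL
      simp only [hidx, dif_pos h]
      exact h.choose_spec
    have hend : ∀ v ∈ L,
        (p (idx v)).head? = some v ∨ (p (idx v)).getLast? = some v := by
      intro v hvL
      exact leaf_endpt (Finset.mem_filter.mp hvL).2 _ (hp _).1 (hp _).2 (hidxspec v hvL)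
    set f : V → Fin k × Bool := fun v =>
      (idx v, if (p (idx v)).head? = some v then true else false) with hf
    have : L.card ≤ (Finset.univ : Finset (Fin k × Bool)).card := by
      apply Finset.card_le_card_of_injOn f (fun _ _ => Finset.mem_univ _)
      intro v hv w hw hfeq
      have h1 : idx v = idx w := congrArg Prod.fst hfeq
      have h2 : (if (p (idx v)).head? = some v then true else false)
          = (if (p (idx w)).head? = some w then true else false) := congrArg Prod.snd hfeq
      rw [h1] at h2
      by_cases hc : (p (idx w)).head? = some v
      · rw [if_pos hc] at h2
        by_cases hc' : (p (idx w)).head? = some w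
        · rw [hc'] at hc; exact (Option.some_inj.mp hc).symm
        · rw [if_neg hc'] at h2; simp at h2
      · rw [if_neg hc] at h2
        by_cases hc' : (p (idx w)).head? = some w
        · rw [if_pos hc'] at h2; simp at h2
        · have e1 : (p (idx w)).getLast? = some v := by
            rcases hend v hv with h | h
            · rw [h1] at h; exact absurd h hc
            · rw [h1] at h; exact h
          have e2 : (p (idx w)).getLast? = some w := by
            rcases hend w hw with h | h
            · exact absurd h hc'
            · exact h
          rw [e1] at e2; exact Option.some_inj.mp e2
    simpa [Fintype.card_prod, mul_comm] using this
  -- counting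
  have hpart : L.card + (Finset.univ.filter (fun v => ¬ G.degree v = 1)).card
      = Fintype.card V := by
    simpa [hLdef, Finset.card_univ] using Finset.card_filter_add_card_filter_not
      (s := (Finset.univ : Finset V)) (p := fun v => G.degree v = 1)
  have hsum : ∑ v, G.degree v = 2 * G.edgeFinset.card :=
    G.sum_degrees_eq_twice_card_edges
  have hE := hT.card_edgeFinset
  have hcard : (Finset.univ : Finset V).card = Fintype.card V := Finset.card_univ
  have hsplit : L.card + 3 * (Finset.univ.filter (fun v => ¬ G.degree v = 1)).card
      ≤ ∑ v, G.degree v := by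
    rw [← Finset.sum_filter_add_sum_filter_not Finset.univ (fun v => G.degree v = 1)]
    gcongr
    · calc L.card = ∑ v ∈ L, 1 := by simp
        _ ≤ ∑ v ∈ L, G.degree v := by
          apply Finset.sum_le_sum; intro v hv
          exact (hdpos v)
    · calc 3 * (Finset.univ.filter (fun v => ¬ G.degree v = 1)).card
          = ∑ v ∈ Finset.univ.filter (fun v => ¬ G.degree v = 1), 3 := by
            rw [Finset.sum_const, smul_eq_mul, mul_comm]
        _ ≤ _ := by
          apply Finset.sum_le_sum
          intro v hv
          have h1 := (Finset.mem_filter.mp hv).2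
          have := hdpos v
          have := hdeg v
          omega
  omega
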